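/- Let n ≥ 3 and let σ, τ ∈ S_n have McMahon codes s = s_1 s_2 … s_n and t = t_1 t_2 … t_n respectively (both subexcedant sequences). Suppose there is an index f with 2 ≤ f ≤ n−1 such that t_i = s_i for all i except t_f = s_f − 1 and t_{f+1} = s_{f+1} + 1. Then τ = σ·⟨α^{−1}(f+1), α^{−1}(s_f)⟩, where α = [[f−1, s_{f−1}]]·[[f−2, s_{f−2}]]·…·[[1, s_1]]. In particular, τ and σ differ by a single transposition. -/

import Mathlib

/-- `rot u k` is the permutation `[[u,k]]` of `{1,…,u} ⊆ ℕ` obtained by `k`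
right circular shifts of the first `u` entries of the identity (positions are
1-based; all other natural numbers are fixed): `[[u,k]] i = u - k + i` for
`1 ≤ i ≤ k`, `[[u,k]] i = i - k` for `k < i ≤ u` and `[[u,k]] i = i` for `i > u`.
It is (junk-)defined as the identity when `¬ k < u`. -/
def rot (u k : ℕ) : Equiv.Perm ℕ :=
  if _h : k < u then
    { toFun := fun i =>
        if 1 ≤ i ∧ i ≤ k then u - k + i
        else if k < i ∧ i ≤ u then i - k
        else i
      invFun := fun j =>
        if u - k + 1 ≤ j ∧ j ≤ u then j - (u - k)
        else if 1 ≤ j ∧ j ≤ u - k then j + k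
        else j
      left_inv := by intro i; dsimp only; split_ifs <;> omega
      right_inv := by intro j; dsimp only; split_ifs <;> omega }
  else 1

/-- `psi n t = [[n, t n]] · [[n-1, t (n-1)]] · ⋯ · [[2, t 2]] · [[1, t 1]]`, where
permutations act on indices, i.e. `(σ * τ) i = σ (τ i)`.  When `t` is a subexcedant
sequence of length `n`, `t` is called the McMahon code of the permutation `psi n t`. -/
def psi (n : ℕ) (t : ℕ → ℕ) : Equiv.Perm ℕ :=
  ((List.range n).reverse.map (fun i => rot (i + 1) (t (i + 1)))).prod

/-- `c` is a subexcedant sequence of length `n`: `0 ≤ c i ≤ i - 1` for `1 ≤ i ≤ n`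
(positions are 1-based). -/
def Subexcedant (n : ℕ) (c : ℕ → ℕ) : Prop :=
  ∀ i, 1 ≤ i → i ≤ n → c i ≤ i - 1

/-- The major index of a permutation of `{1,…,n}`:
`maj π = ∑_{1 ≤ i < n, π i > π (i+1)} i`. -/
def maj (n : ℕ) (π : Equiv.Perm ℕ) : ℕ :=
  ∑ i ∈ Finset.Ico 1 n, if π (i + 1) < π i then i else 0

lemma rot_apply {u k : ℕ} (h : k < u) (i : ℕ) :
    rot u k i = if 1 ≤ i ∧ i ≤ k then u - k + i
      else if k < i ∧ i ≤ u then i - k else i := by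
  simp [rot, dif_pos h]

set_option maxHeartbeats 2000000 in
lemma rot_key (f c d : ℕ) (hf : 2 ≤ f) (hd1 : 1 ≤ d) (hd2 : d ≤ f - 1)
    (hc : c + 1 ≤ f) :
    rot (f+1) (c+1) * rot f (d-1) =
      (rot (f+1) c * rot f d) * Equiv.swap (f+1) d := by
  ext i
  simp only [Equiv.Perm.mul_apply, Equiv.swap_apply_def,
    rot_apply (show c + 1 < f + 1 by omega),
    rot_apply (show d - 1 < f by omega),
    rot_apply (show c < f + 1 by omega),
    rot_apply (show d < f by omega)]
  split_ifs <;> omega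

lemma psi_succ (m : ℕ) (t : ℕ → ℕ) :
    psi (m + 1) t = rot (m + 1) (t (m + 1)) * psi m t := by
  simp [psi, List.range_succ, List.prod_cons]

lemma psi_congr (m : ℕ) (s t : ℕ → ℕ) (h : ∀ i, 1 ≤ i → i ≤ m → s i = t i) :
    psi m s = psi m t := by
  induction m with
  | zero => rfl
  | succ k ih =>
      rw [psi_succ, psi_succ, h (k + 1) (by omega) le_rfl,
        ih fun i h1 h2 => h i h1 (by omega)]

/-- if the McMahon codes `s`, `t` of `σ`, `τ ∈ S_n` (`n ≥ 3`) agree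
everywhere except that `t f = s f - 1` and `t (f+1) = s (f+1) + 1` for some
`2 ≤ f ≤ n-1`, then `τ = σ · ⟨α⁻¹ (f+1), α⁻¹ (s f)⟩` where
`α = [[f-1, s (f-1)]]·[[f-2, s (f-2)]]·…·[[1, s 1]] = psi (f-1) s`;
in particular `σ` and `τ` differ by a single transposition. -/
theorem mcmahon_adjacent_transfer (n f : ℕ) (s t : ℕ → ℕ) (σ τ : Equiv.Perm ℕ)
    (hn : 3 ≤ n) (hs : Subexcedant n s) (ht : Subexcedant n t)
    (hσ : σ = psi n s) (hτ : τ = psi n t)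
    (hf1 : 2 ≤ f) (hf2 : f ≤ n - 1)
    (heq : ∀ i, i ≠ f → i ≠ f + 1 → t i = s i)
    (hft : t f + 1 = s f) (hft1 : t (f + 1) = s (f + 1) + 1) :
    τ = σ * Equiv.swap ((psi (f - 1) s)⁻¹ (f + 1)) ((psi (f - 1) s)⁻¹ (s f)) := by
  have hfn : f + 1 ≤ n := by omega
  set d := s f with hd
  set c := s (f + 1) with hc
  set B := psi (f - 1) s with hB
  have hd1 : 1 ≤ d := by omega
  have hd2 : d ≤ f - 1 := hs f (by omega) (by omega)
  have hc1 : c + 1 ≤ f := by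
    have := ht (f + 1) (by omega) hfn
    omega
  -- base case at f+1
  have hfm : f - 1 + 1 = f := by omega
  have hbase : psi (f + 1) t =
      psi (f + 1) s * Equiv.swap (B⁻¹ (f + 1)) (B⁻¹ d) := by
    have h1 : psi (f + 1) t = rot (f + 1) (c + 1) * (rot f (d - 1) * psi (f - 1) t) := by
      rw [psi_succ, hft1, ← hfm, psi_succ, hfm, show t f = d - 1 by omega]
    have h2 : psi (f + 1) s = rot (f + 1) c * (rot f d * psi (f - 1) s) := by
      rw [psi_succ, ← hfm, psi_succ, hfm]
    have h3 : psi (f - 1) t = B := by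
      rw [hB]
      exact psi_congr _ _ _ fun i hi1 hi2 => (heq i (by omega) (by omega)).symm ▸ rfl
    rw [h1, h3, ← mul_assoc, rot_key f c d hf1 hd1 hd2 hc1, h2,
      Equiv.swap_apply_apply, ← mul_assoc]
    rw [← hB]
    group
  -- extend up to n
  have hup : ∀ m, f + 1 ≤ m → m ≤ n →
      psi m t = psi m s * Equiv.swap (B⁻¹ (f + 1)) (B⁻¹ d) := by
    intro m hm
    induction m, hm using Nat.le_induction with
    | base => intro _; exact hbase
    | succ k hk ih =>
        intro hkn
        rw [psi_succ, psi_succ, heq (k + 1) (by omega) (by omega),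
          ih (by omega), mul_assoc]
  rw [hσ, hτ, hup n (by omega) le_rfl]
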